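/- Suppose ∑_{λ∈Λ} |f(λ)|² ≤ C|Ω|·‖f‖² for all f ∈ PW_Ω, where C > 0, Ω ⊂ ℝ has finite positive measure, and Λ ⊂ ℝ. Then there exists K > 0, depending only on Ω, such that #(Λ ∩ I)/|I| ≤ 4C|Ω| for every interval I ⊂ ℝ with |I| ≥ K. -/

import Mathlib

open MeasureTheory ENNReal Filter

/-- The (inverse) Fourier transform with the paper's normalization:
`f(x) = (2π)^{-1/2} ∫ e^{-itx} F(t) dt`. -/
noncomputable def FT (F : ℝ → ℂ) (x : ℝ) : ℂ :=
  (Real.sqrt (2 * Real.pi) : ℂ)⁻¹ * ∫ t : ℝ, Complex.exp (-(Complex.I * t * x)) * F t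

/-- `f` belongs to the Paley–Wiener space `PW_Ω`: it is the Fourier transform of an
`L²` function `F` vanishing outside `Ω` (such `F` is automatically integrable when
`Ω` has finite measure, so `f` is continuous and pointwise evaluation makes sense). -/
def IsPW (Ω : Set ℝ) (f : ℝ → ℂ) : Prop :=
  ∃ F : ℝ → ℂ, MemLp F 2 volume ∧ (∀ t ∉ Ω, F t = 0) ∧ Integrable F volume ∧
    ∀ x, f x = FT F x

/-- `Λ ⊆ ℝ` has separation constant at least `δ`. -/
def Separated (δ : ℝ) (Λ : Set ℝ) : Prop :=
  ∀ x ∈ Λ, ∀ y ∈ Λ, x ≠ y → δ ≤ |x - y|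

lemma FT_eq (F : ℝ → ℂ) (x : ℝ) :
    FT F x = (Real.sqrt (2 * Real.pi) : ℂ)⁻¹ * FourierTransform.fourier F (x / (2 * Real.pi)) := by
  rw [FT, Real.fourier_real_eq_integral_exp_smul]
  congr 1
  refine integral_congr_ae (Eventually.of_forall fun t => ?_)
  show Complex.exp (-(Complex.I * t * x)) * F t
      = Complex.exp (((-2 * Real.pi * t * (x / (2 * Real.pi)) : ℝ) : ℂ) * Complex.I) • F t
  rw [smul_eq_mul]
  congr 2
  have hπ : (Real.pi : ℂ) ≠ 0 := by exact_mod_cast Real.pi_ne_zero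
  push_cast
  field_simp

lemma FT_continuous {F : ℝ → ℂ} (hF : Integrable F) : Continuous (FT F) := by
  have h : Continuous (FourierTransform.fourier F) :=
    VectorFourier.fourierIntegral_continuous Real.continuous_fourierChar
      (by exact (innerSL ℝ).continuous₂) hF
  have : Continuous fun x : ℝ => ((Real.sqrt (2 * Real.pi) : ℂ)⁻¹ *
      FourierTransform.fourier F (x / (2 * Real.pi))) :=
    continuous_const.mul (h.comp (continuous_id.div_const _))
  simpa [funext (FT_eq F)] using this

lemma FT_translate (F : ℝ → ℂ) (s x : ℝ) :
    FT (fun t => Complex.exp (Complex.I * t * s) * F t) x = FT F (x - s) := by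
  unfold FT
  congr 1
  refine integral_congr_ae (Eventually.of_forall fun t => ?_)
  show Complex.exp (-(Complex.I * t * x)) * (Complex.exp (Complex.I * t * s) * F t)
      = Complex.exp (-(Complex.I * t * ((x : ℝ) - s : ℝ))) * F t
  rw [← mul_assoc, ← Complex.exp_add]
  push_cast
  ring_nf

lemma norm_exp_I_mul (t s : ℝ) : ‖Complex.exp (Complex.I * t * s)‖ = 1 := by
  rw [Complex.norm_exp]
  simp

lemma isPW_translate {Ω : Set ℝ} {f : ℝ → ℂ} (h : IsPW Ω f) (s : ℝ) :
    IsPW Ω (fun x => f (x - s)) := by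
  obtain ⟨F, hmem, hvan, hint, heq⟩ := h
  refine ⟨fun t => Complex.exp (Complex.I * t * s) * F t, ?_, ?_, ?_, ?_⟩
  · have hc : Continuous fun t : ℝ => Complex.exp (Complex.I * t * s) := by
      continuity
    refine MemLp.of_le hmem (hc.aestronglyMeasurable.mul hmem.1)
      (Eventually.of_forall fun t => ?_)
    rw [norm_mul, norm_exp_I_mul, one_mul]
  · intro t ht; simp only []; rw [hvan t ht, mul_zero]
  · refine Integrable.bdd_mul (c := 1) hint ?_ (Eventually.of_forall fun t => le_of_eq (norm_exp_I_mul t s))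
    exact (by continuity :
      Continuous fun t : ℝ => Complex.exp (Complex.I * t * s)).aestronglyMeasurable
  · intro x; simp only []; rw [heq, FT_translate]

theorem stmt13 (Ω : Set ℝ) (hmeas : MeasurableSet Ω) (hpos : 0 < volume Ω)
    (hfin : volume Ω < ⊤) (C : ℝ) (hC : 0 < C) (Λ : Set ℝ)
    (hyp : ∀ f : ℝ → ℂ, IsPW Ω f →
      ∑' l : ↥Λ, (‖f (l : ℝ)‖₊ ^ 2 : ℝ≥0∞) ≤
        ENNReal.ofReal (C * (volume Ω).toReal * ∫ x : ℝ, ‖f x‖ ^ 2)) :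
    ∃ K : ℝ, 0 < K ∧ ∀ a L : ℝ, K ≤ L →
      (Λ ∩ Set.Icc a (a + L)).encard ≤
        ENNReal.ofReal (4 * C * (volume Ω).toReal * L) := by
  classical
  set W : ℝ := (volume Ω).toReal with hW_def
  have hW : 0 < W := ENNReal.toReal_pos hpos.ne' hfin.ne
  set F : ℝ → ℂ := Ω.indicator fun _ => (1 : ℂ) with hF_def
  have hFmem : MemLp F 2 volume := memLp_indicator_const 2 hmeas 1 (Or.inr hfin.ne)
  have hFint : Integrable F volume := by
    rw [hF_def, integrable_indicator_iff hmeas]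
    exact integrableOn_const hfin.ne
  set g : ℝ → ℂ := FT F with hg_def
  have hgPW : IsPW Ω g :=
    ⟨F, hFmem, fun t ht => Set.indicator_of_notMem ht _, hFint, fun _ => rfl⟩
  have hgc : Continuous g := FT_continuous hFint
  have hg0 : g 0 ≠ 0 := by
    have h1 : g 0 = (Real.sqrt (2 * Real.pi) : ℂ)⁻¹ * ∫ t : ℝ, F t := by
      rw [hg_def, FT]
      congr 1
      refine integral_congr_ae (Eventually.of_forall fun t => ?_)
      show Complex.exp (-(Complex.I * t * ((0 : ℝ) : ℂ))) * F t = F t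
      norm_num
    have h2 : (∫ t : ℝ, F t) = (W : ℂ) := by
      rw [hF_def, integral_indicator_const (1 : ℂ) hmeas]
      simp [hW_def, measureReal_def]
    have hs : Real.sqrt (2 * Real.pi) ≠ 0 := by positivity
    rw [h1, h2]
    exact mul_ne_zero (inv_ne_zero (by exact_mod_cast hs)) (by exact_mod_cast hW.ne')
  have hmeasl : ∀ l : ℝ, Measurable fun s : ℝ => ((‖g (l - s)‖₊ : ℝ≥0∞) ^ 2) := fun l =>
    ((hgc.comp (continuous_const.sub continuous_id)).nnnorm.measurable.coe_nnreal_ennreal).pow_const 2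
  by_cases hint : Integrable (fun x => ‖g x‖ ^ 2) volume
  · -- main case
    set N : ℝ := ∫ x : ℝ, ‖g x‖ ^ 2 with hN_def
    have hg0' : 0 < ‖g 0‖ ^ 2 := pow_pos (norm_pos_iff.2 hg0) 2
    have hcont : Continuous fun x : ℝ => ‖g x‖ ^ 2 := (hgc.norm).pow 2
    have hN : 0 < N := by
      have hev : ∀ᶠ x in nhds (0 : ℝ), 0 < ‖g x‖ ^ 2 :=
        (hcont.continuousAt (x := 0)).eventually (eventually_gt_nhds hg0')
      obtain ⟨η, hη0, hη⟩ := Metric.eventually_nhds_iff.1 hev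
      have hii : IntervalIntegrable (fun x => ‖g x‖ ^ 2) volume (-(η / 2)) (η / 2) :=
        hint.intervalIntegrable
      have hpos' : 0 < ∫ x in (-(η / 2))..(η / 2), ‖g x‖ ^ 2 := by
        refine intervalIntegral.intervalIntegral_pos_of_pos_on hii (fun x hx => ?_) (by linarith)
        refine hη ?_
        rw [Real.dist_eq, sub_zero]
        rcases hx with ⟨h1, h2⟩
        rw [abs_lt]
        constructor <;> linarith
      have hle : (∫ x in (-(η / 2))..(η / 2), ‖g x‖ ^ 2) ≤ N := by
        rw [intervalIntegral.integral_of_le (by linarith)]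
        exact setIntegral_le_integral hint (Eventually.of_forall fun x => by positivity)
      linarith
    obtain ⟨T, hT1, hTm⟩ : ∃ T : ℝ, 1 ≤ T ∧ N / 2 ≤ ∫ x in (-T)..T, ‖g x‖ ^ 2 := by
      have htend : Tendsto (fun T : ℝ => ∫ x in (-T)..T, ‖g x‖ ^ 2) atTop (nhds N) :=
        intervalIntegral_tendsto_integral hint tendsto_neg_atTop_atBot tendsto_id
      have h1 : ∀ᶠ T : ℝ in atTop, N / 2 ≤ ∫ x in (-T)..T, ‖g x‖ ^ 2 :=
        htend.eventually (eventually_ge_nhds (by linarith))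
      obtain ⟨T, hT⟩ := (h1.and (eventually_ge_atTop (1 : ℝ))).exists
      exact ⟨T, hT.2, hT.1⟩
    refine ⟨2 * T, by linarith, fun a L hL => ?_⟩
    have hT0 : 0 < T := by linarith
    have hL0 : 0 < L := by linarith
    set S : Set ℝ := Λ ∩ Set.Icc a (a + L) with hS_def
    set J : Set ℝ := Set.Icc (a - T) (a + L + T) with hJ_def
    have key : ∀ s : ℝ, (∑' l : ↥Λ, ((‖g ((l : ℝ) - s)‖₊ : ℝ≥0∞) ^ 2)) ≤
        ENNReal.ofReal (C * W * N) := by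
      intro s
      have h := hyp (fun x => g (x - s)) (isPW_translate hgPW s)
      have h2 : (∫ x : ℝ, ‖g (x - s)‖ ^ 2) = N :=
        integral_sub_right_eq_self (μ := volume) (fun x => ‖g x‖ ^ 2) s
      rw [← h2]
      exact h
    have lower : ∀ l : ℝ, l ∈ S →
        ENNReal.ofReal (N / 2) ≤ ∫⁻ s in J, ((‖g (l - s)‖₊ : ℝ≥0∞) ^ 2) := by
      intro l hl
      have hmem : l ∈ Set.Icc a (a + L) := hl.2
      have hsub : Set.Ico (l - T) (l + T) ⊆ J := by
        rintro s ⟨h3, h4⟩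
        rcases hmem with ⟨h1, h2⟩
        exact ⟨by linarith, by linarith⟩
      have hm : MeasurePreserving (fun s : ℝ => l - s) volume volume :=
        Measure.measurePreserving_sub_left volume l
      have hemb : MeasurableEmbedding (fun s : ℝ => l - s) :=
        (MeasurableEquiv.subLeft l).measurableEmbedding
      have hpre : (fun s : ℝ => l - s) ⁻¹' Set.Ioc (-T) T = Set.Ico (l - T) (l + T) := by
        ext s
        simp only [Set.mem_preimage, Set.mem_Ioc, Set.mem_Ico]
        constructor
        · rintro ⟨h1, h2⟩; exact ⟨by linarith, by linarith⟩
        · rintro ⟨h1, h2⟩; exact ⟨by linarith, by linarith⟩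
      calc ENNReal.ofReal (N / 2)
          ≤ ENNReal.ofReal (∫ x in (-T)..T, ‖g x‖ ^ 2) := ENNReal.ofReal_le_ofReal hTm
        _ = ENNReal.ofReal (∫ x in Set.Ioc (-T) T, ‖g x‖ ^ 2) := by
            rw [intervalIntegral.integral_of_le (by linarith)]
        _ = ∫⁻ x in Set.Ioc (-T) T, ENNReal.ofReal (‖g x‖ ^ 2) :=
            ofReal_integral_eq_lintegral_ofReal hint.restrict
              (Eventually.of_forall fun x => by positivity)
        _ = ∫⁻ x in Set.Ioc (-T) T, ((‖g x‖₊ : ℝ≥0∞) ^ 2) := by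
            refine lintegral_congr fun x => ?_
            rw [ENNReal.ofReal_pow (norm_nonneg _), ← coe_nnnorm, ENNReal.ofReal_coe_nnreal]
        _ = ∫⁻ s in Set.Ico (l - T) (l + T), ((‖g (l - s)‖₊ : ℝ≥0∞) ^ 2) := by
            rw [← hpre]
            exact (hm.setLIntegral_comp_preimage_emb hemb
              (fun u => ((‖g u‖₊ : ℝ≥0∞) ^ 2)) _).symm
        _ ≤ ∫⁻ s in J, ((‖g (l - s)‖₊ : ℝ≥0∞) ^ 2) := lintegral_mono_set hsub
    -- bound for arbitrary finite subsets of S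
    have finbound : ∀ V : Finset ℝ, ↑V ⊆ S →
        (V.card : ℝ≥0∞) * ENNReal.ofReal (N / 2) ≤
          ENNReal.ofReal (L + 2 * T) * ENNReal.ofReal (C * W * N) := by
      intro V hV
      have hVΛ : ∀ {x : ℝ}, x ∈ V → x ∈ Λ := fun hx => (hV hx).1
      calc (V.card : ℝ≥0∞) * ENNReal.ofReal (N / 2)
          = ∑ _l ∈ V, ENNReal.ofReal (N / 2) := by
            rw [Finset.sum_const, nsmul_eq_mul]
        _ ≤ ∑ l ∈ V, ∫⁻ s in J, ((‖g (l - s)‖₊ : ℝ≥0∞) ^ 2) :=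
            Finset.sum_le_sum fun l hl => lower l (hV hl)
        _ = ∫⁻ s in J, ∑ l ∈ V, ((‖g (l - s)‖₊ : ℝ≥0∞) ^ 2) :=
            (lintegral_finset_sum V fun l _ => hmeasl l).symm
        _ ≤ ∫⁻ s in J, ∑' l : ↥Λ, ((‖g ((l : ℝ) - s)‖₊ : ℝ≥0∞) ^ 2) := by
            refine lintegral_mono fun s => ?_
            rw [← Finset.tsum_subtype V (fun l => ((‖g (l - s)‖₊ : ℝ≥0∞) ^ 2))]
            exact Summable.tsum_le_tsum_of_inj (fun b => (⟨b.1, hVΛ b.2⟩ : ↥Λ))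
              (fun b c h => by apply Subtype.ext; exact congrArg (fun x : ↥Λ => x.val) h)
              (fun _ _ => zero_le) (fun b => le_rfl) ENNReal.summable ENNReal.summable
        _ ≤ ∫⁻ _ in J, ENNReal.ofReal (C * W * N) := lintegral_mono fun s => key s
        _ = ENNReal.ofReal (C * W * N) * volume J := setLIntegral_const J _
        _ = ENNReal.ofReal (L + 2 * T) * ENNReal.ofReal (C * W * N) := by
            rw [hJ_def, Real.volume_Icc, mul_comm]
            congr 1
            ring
    have hhalf : (0 : ℝ) < N / 2 := by linarith
    have hdiv : (ENNReal.ofReal (L + 2 * T) * ENNReal.ofReal (C * W * N)) /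
        ENNReal.ofReal (N / 2) ≤ ENNReal.ofReal (4 * C * W * L) := by
      rw [← ENNReal.ofReal_mul (by linarith), ← ENNReal.ofReal_div_of_pos hhalf]
      refine ENNReal.ofReal_le_ofReal ?_
      have heq : (L + 2 * T) * (C * W * N) / (N / 2) = 2 * (C * W) * (L + 2 * T) := by
        field_simp
      rw [heq]
      nlinarith [mul_pos hC hW]
    have hcard : ∀ V : Finset ℝ, ↑V ⊆ S →
        (V.card : ℝ≥0∞) ≤ ENNReal.ofReal (4 * C * W * L) := by
      intro V hV
      refine le_trans ?_ hdiv
      exact (ENNReal.le_div_iff_mul_le (Or.inl (ENNReal.ofReal_pos.2 hhalf).ne')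
        (Or.inl ENNReal.ofReal_ne_top)).2 (finbound V hV)
    -- conclude
    by_contra hcon
    push_neg at hcon
    obtain ⟨n, hn⟩ := ENNReal.exists_nat_gt (ENNReal.ofReal_ne_top
      (r := 4 * C * W * L))
    have hk : (min (n : ℕ∞) S.encard) ≤ S.encard := min_le_right _ _
    obtain ⟨t, hts, htc⟩ := Set.exists_subset_encard_eq hk
    have htfin : t.Finite := by
      refine Set.encard_ne_top_iff.1 ?_
      rw [htc]
      exact ne_top_of_le_ne_top (by simp) (min_le_left _ _)
    have hVS : ↑htfin.toFinset ⊆ S := by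
      rw [Set.Finite.coe_toFinset]; exact hts
    have hVcard : ((htfin.toFinset.card : ℕ∞) : ℝ≥0∞) = ((min (n : ℕ∞) S.encard : ℕ∞) : ℝ≥0∞) := by
      rw [← htc, htfin.encard_eq_coe_toFinset_card]
    have hlt : ENNReal.ofReal (4 * C * W * L) < (htfin.toFinset.card : ℝ≥0∞) := by
      have : ENNReal.ofReal (4 * C * W * L) <
          ((min (n : ℕ∞) S.encard : ℕ∞) : ℝ≥0∞) := by
        rw [ENat.toENNReal_mono.map_min]
        refine lt_min ?_ hcon
        rw [ENat.toENNReal_coe]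
        exact hn
      rw [← hVcard] at this
      rwa [ENat.toENNReal_coe] at this
    exact absurd (hcard htfin.toFinset hVS) (not_le.2 hlt)
  · -- g is not square-integrable: then Λ must be empty
    have hΛ : Λ = ∅ := by
      by_contra h
      obtain ⟨l0, hl0⟩ := Set.nonempty_iff_ne_empty.2 h
      have hni : ¬ Integrable (fun x => ‖g (x - l0)‖ ^ 2) volume := by
        intro h'
        apply hint
        have := h'.comp_sub_right (-l0)
        simpa using this
      have h := hyp (fun x => g (x - l0)) (isPW_translate hgPW l0)
      rw [integral_undef hni] at h
      simp only [mul_zero, ENNReal.ofReal_zero, nonpos_iff_eq_zero] at h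
      have hterm : ((‖g ((l0 : ℝ) - l0)‖₊ : ℝ≥0∞) ^ 2) ≤ 0 := by
        rw [← h]
        exact ENNReal.le_tsum (⟨l0, hl0⟩ : ↥Λ)
      rw [sub_self] at hterm
      have hz : g 0 = 0 := by
        have h2 : ((‖g 0‖₊ : ℝ≥0∞) ^ 2) = 0 := le_antisymm hterm (zero_le)
        have h3 : (‖g 0‖₊ : ℝ≥0∞) = 0 := by
          exact pow_eq_zero_iff (n := 2) (by norm_num) |>.1 h2
        simpa using h3
      exact hg0 hz
    refine ⟨1, one_pos, fun a L hL => ?_⟩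
    rw [hΛ]
    simp only [Set.empty_inter, Set.encard_empty]
    exact_mod_cast zero_le
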